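/- Let H = ℓ²(ℕ, ℝ), let B(x,y) = −x₀·y₀ + Σ_{i≥1} x_i·y_i, Q(x) = B(x,x), and let 𝐇 = {x ∈ H : Q(x) = −1 and x₀ > 0} be the infinite-dimensional hyperboloid. Let I be a subset of ℕ∖{0} and let Y = {y ∈ 𝐇 : y_i = 0 for all i ∈ I}. Then for every x ∈ 𝐇: the vector y* = (x − Σ_{i∈I} x_i·e_i)/√(1 + Σ_{i∈I} x_i²) belongs to Y, the infimum inf_{y∈Y} arcosh(−B(x,y)) is attained at y*, and this infimum equals arcosh(√(x₀² − Σ_{i≥1, i∉I} x_i²)); equivalently, cosh of the hyperbolic distance from x to Y equals √(x₀² − Σ_{i≥1, i∉I} x_i²). -/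

import Mathlib

noncomputable section

/-- The real Hilbert space `ℓ²(ℕ, ℝ)` of square-summable real sequences. -/
abbrev ℓ2 : Type := lp (fun _ : ℕ => ℝ) 2

/-- The bilinear form of signature `(∞,1)`: `B(x,y) = -x₀y₀ + ∑_{i ≥ 1} xᵢyᵢ`. -/
def Bform (x y : ℓ2) : ℝ := -(x 0 * y 0) + ∑' i : {i : ℕ // 1 ≤ i}, x i * y i

/-- The quadratic form `Q(x) = B(x,x)`. -/
def Qform (x : ℓ2) : ℝ := Bform x x

/-- The infinite-dimensional hyperboloid `𝐇 = {x : Q(x) = -1, x₀ > 0}`. -/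
def Hyp : Set ℓ2 := {x | Qform x = -1 ∧ 0 < x 0}

/-- The inverse hyperbolic cosine, `arcosh t = log (t + √(t² - 1))`. -/
def arcosh (t : ℝ) : ℝ := Real.log (t + Real.sqrt (t ^ 2 - 1))

open Set

lemma ℓ2.summable_mul (x y : ℓ2) : Summable fun i : ℕ => x i * y i := by
  have := lp.summable_inner (𝕜 := ℝ) y x
  simpa [RCLike.inner_apply, starRingEnd_apply] using this

def ℓ2.eval (j : ℕ) : ℓ2 →L[ℝ] ℝ :=
  LinearMap.mkContinuous
    { toFun := fun f => f j
      map_add' := fun f g => by simp [lp.coeFn_add]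
      map_smul' := fun c f => by simp [lp.coeFn_smul] }
    1 (fun f => by
      show ‖(f : ℕ → ℝ) j‖ ≤ 1 * ‖f‖
      simpa using lp.norm_apply_le_norm (by norm_num : (2 : ENNReal) ≠ 0) f j)

@[simp] lemma ℓ2.eval_apply (j : ℕ) (f : ℓ2) : ℓ2.eval j f = f j := rfl

lemma ℓ2.summable_single (x : ℓ2) (I : Set ℕ) :
    Summable (fun i : I => (lp.single 2 (i : ℕ) (x i) : ℓ2)) :=
  ((lp.hasSum_single (by norm_num) x).summable).subtype I

lemma tsum_single_coord (I : Set ℕ) (x : ℓ2) (j : ℕ) :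
    ((∑' i : I, (x i) • lp.single 2 (i : ℕ) (1 : ℝ) : ℓ2)) j
      = I.indicator (fun i => x i) j := by
  have hfun : (fun i : I => (x i) • lp.single 2 (i : ℕ) (1 : ℝ) : I → ℓ2)
      = fun i : I => (lp.single 2 (i : ℕ) (x i) : ℓ2) := by
    funext i
    rw [← lp.single_smul, smul_eq_mul, mul_one]
  rw [hfun]
  have hsum := ℓ2.summable_single x I
  have := (ℓ2.eval j).map_tsum hsum
  rw [ℓ2.eval_apply] at this
  rw [this]
  simp only [ℓ2.eval_apply]
  by_cases hj : j ∈ I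
  · rw [Set.indicator_of_mem hj]
    rw [tsum_eq_single (⟨j, hj⟩ : I)]
    · simp [lp.single_apply_self]
    · intro i hi
      apply lp.single_apply_ne
      intro h
      exact hi (Subtype.ext h.symm)
  · rw [Set.indicator_of_notMem hj]
    have hz : (fun i : I => ((lp.single 2 (i : ℕ) (x i) : ℓ2)) j) = fun _ => (0 : ℝ) := by
      funext i
      exact lp.single_apply_ne 2 _ _ (fun h => hj (by rw [h]; exact i.2))
    rw [hz, tsum_zero]

lemma arcosh_mono {a b : ℝ} (ha : 1 ≤ a) (hab : a ≤ b) : arcosh a ≤ arcosh b := by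
  unfold arcosh
  have h1 : (0:ℝ) < a + Real.sqrt (a ^ 2 - 1) := by
    have := Real.sqrt_nonneg (a ^ 2 - 1); linarith
  apply Real.log_le_log h1
  have : Real.sqrt (a ^ 2 - 1) ≤ Real.sqrt (b ^ 2 - 1) :=
    Real.sqrt_le_sqrt (by nlinarith)
  linarith

lemma tsum_CS (f g : ℕ → ℝ) (hf : Summable fun i => f i ^ 2) (hg : Summable fun i => g i ^ 2)
    (hfg : Summable fun i => f i * g i) :
    ∑' i, f i * g i ≤ Real.sqrt (∑' i, f i ^ 2) * Real.sqrt (∑' i, g i ^ 2) := by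
  refine Summable.tsum_le_of_sum_le hfg fun s => ?_
  calc ∑ i ∈ s, f i * g i
      ≤ Real.sqrt (∑ i ∈ s, f i ^ 2) * Real.sqrt (∑ i ∈ s, g i ^ 2) :=
        Real.sum_mul_le_sqrt_mul_sqrt s f g
    _ ≤ Real.sqrt (∑' i, f i ^ 2) * Real.sqrt (∑' i, g i ^ 2) := by
        apply mul_le_mul
        · exact Real.sqrt_le_sqrt (Summable.sum_le_tsum s (fun i _ => sq_nonneg _) hf)
        · exact Real.sqrt_le_sqrt (Summable.sum_le_tsum s (fun i _ => sq_nonneg _) hg)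
        · exact Real.sqrt_nonneg _
        · exact Real.sqrt_nonneg _

lemma bform_ge_one {u v : ℓ2} (hu : u ∈ Hyp) (hv : v ∈ Hyp) : 1 ≤ -(Bform u v) := by
  obtain ⟨huQ, hu0⟩ := hu
  obtain ⟨hvQ, hv0⟩ := hv
  set A : Set ℕ := {i | 1 ≤ i} with hA
  have hind : ∀ w z : ℓ2, (∑' i : {i : ℕ // 1 ≤ i}, w i * z i)
      = ∑' i : ℕ, A.indicator (fun i => w i) i * A.indicator (fun i => z i) i := by
    intro w z
    rw [show (∑' i : {i : ℕ // 1 ≤ i}, w i * z i) = ∑' i : A, w i * z i from rfl,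
      tsum_subtype A (fun i => w i * z i)]
    congr 1
    funext i
    by_cases hi : i ∈ A <;> simp [Set.indicator_apply, hi]
  have hsq : ∀ w : ℓ2, Summable (fun i => (A.indicator (fun i => w i) i) ^ 2) := by
    intro w
    have : Summable fun i : ℕ => (w i) ^ 2 := by
      simpa [sq] using ℓ2.summable_mul w w
    refine (this.indicator A).congr fun i => ?_
    by_cases hi : i ∈ A <;> simp [Set.indicator_apply, hi]
  have hmul : ∀ w z : ℓ2,
      Summable (fun i => A.indicator (fun i => w i) i * A.indicator (fun i => z i) i) := by
    intro w z
    have : Summable fun i : ℕ => w i * z i := ℓ2.summable_mul w z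
    refine (this.indicator A).congr fun i => ?_
    by_cases hi : i ∈ A <;> simp [Set.indicator_apply, hi]
  -- abbreviations
  set fu := fun i : ℕ => A.indicator (fun i => u i) i
  set fv := fun i : ℕ => A.indicator (fun i => v i) i
  have hTu : ∑' i, fu i ^ 2 = u 0 ^ 2 - 1 := by
    have := huQ
    unfold Qform Bform at this
    rw [hind u u] at this
    have h2 : ∑' i, fu i * fu i = ∑' i, fu i ^ 2 := by
      congr 1; funext i; ring
    nlinarith [h2, this]
  have hTv : ∑' i, fv i ^ 2 = v 0 ^ 2 - 1 := by
    have := hvQ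
    unfold Qform Bform at this
    rw [hind v v] at this
    have h2 : ∑' i, fv i * fv i = ∑' i, fv i ^ 2 := by
      congr 1; funext i; ring
    nlinarith [h2, this]
  have hCS := tsum_CS fu fv (hsq u) (hsq v) (hmul u v)
  rw [hTu, hTv] at hCS
  have hu1 : 0 ≤ u 0 ^ 2 - 1 := by
    rw [← hTu]; exact tsum_nonneg fun i => sq_nonneg _
  have hv1 : 0 ≤ v 0 ^ 2 - 1 := by
    rw [← hTv]; exact tsum_nonneg fun i => sq_nonneg _
  set p := Real.sqrt (u 0 ^ 2 - 1) with hpdef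
  set q := Real.sqrt (v 0 ^ 2 - 1) with hqdef
  have hp : p ^ 2 = u 0 ^ 2 - 1 := Real.sq_sqrt hu1
  have hq : q ^ 2 = v 0 ^ 2 - 1 := Real.sq_sqrt hv1
  have hp0 : 0 ≤ p := Real.sqrt_nonneg _
  have hq0 : 0 ≤ q := Real.sqrt_nonneg _
  unfold Bform
  rw [hind u v]
  have hkey : 1 + p * q ≤ u 0 * v 0 := by
    nlinarith [sq_nonneg (p - q), mul_pos hu0 hv0, sq_nonneg (u 0 * v 0 + 1 + p * q)]
  linarith [hCS]

/-- Distance to the totally geodesic subspace `Y = {y ∈ 𝐇 : yᵢ = 0 ∀ i ∈ I}` of the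
infinite-dimensional hyperboloid: for `x ∈ 𝐇`, the point
`y* = (x - ∑_{i ∈ I} xᵢ eᵢ) / √(1 + ∑_{i ∈ I} xᵢ²)` lies in `Y`, realizes the infimum of
the hyperbolic distance `arcosh (-B(x,·))` on `Y`, and this infimum equals
`arcosh √(x₀² - ∑_{i ≥ 1, i ∉ I} xᵢ²)`. -/
theorem dist_to_totally_geodesic_subspace
    (I : Set ℕ) (hI : I ⊆ {i : ℕ | i ≠ 0}) (x : ℓ2) (hx : x ∈ Hyp)
    (Y : Set ℓ2) (hY : Y = {y : ℓ2 | y ∈ Hyp ∧ ∀ i ∈ I, y i = 0})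
    (ystar : ℓ2)
    (hystar : ystar =
      (Real.sqrt (1 + ∑' i : I, (x i) ^ 2))⁻¹ •
        (x - ∑' i : I, (x i) • lp.single 2 (i : ℕ) (1 : ℝ))) :
    ystar ∈ Y ∧
    IsLeast ((fun y => arcosh (-(Bform x y))) '' Y) (arcosh (-(Bform x ystar))) ∧
    arcosh (-(Bform x ystar)) =
      arcosh (Real.sqrt ((x 0) ^ 2 - ∑' i : {i : ℕ // 1 ≤ i ∧ i ∉ I}, (x i) ^ 2)) := by
  classical
  obtain ⟨hxQ, hx0⟩ := hx
  have h0I : (0 : ℕ) ∉ I := fun h => (hI h) rfl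
  have hIA : ∀ i ∈ I, 1 ≤ i := fun i hi => Nat.one_le_iff_ne_zero.2 (hI hi)
  have hx2 : Summable fun i : ℕ => (x i) ^ 2 := by
    simpa [sq] using ℓ2.summable_mul x x
  set q : ℕ → ℝ := fun i => (x i) ^ 2 with hqdef
  set S : ℝ := ∑' i : I, (x i) ^ 2 with hSdef
  have hSind : S = ∑' i : ℕ, I.indicator q i := tsum_subtype I q
  have hS0 : 0 ≤ S := by
    rw [hSind]
    exact tsum_nonneg fun i => Set.indicator_nonneg (fun _ _ => sq_nonneg _) i
  set s : ℝ := Real.sqrt (1 + S) with hsdef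
  have hs2 : s ^ 2 = 1 + S := Real.sq_sqrt (by linarith)
  have hs0 : 0 < s := Real.sqrt_pos.2 (by linarith)
  have hs1 : 1 ≤ s := by nlinarith
  have hsne : s ≠ 0 := ne_of_gt hs0
  set A' : Set ℕ := {i | 1 ≤ i ∧ i ∉ I} with hA'def
  set T' : ℝ := ∑' i : {i : ℕ // 1 ≤ i ∧ i ∉ I}, (x i) ^ 2 with hT'def
  have hT'ind : T' = ∑' i : ℕ, A'.indicator q i := tsum_subtype A' q
  -- coordinates of ystar
  have hyc : ∀ j, ystar j = s⁻¹ * (Set.indicator Iᶜ (fun i => x i) j) := by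
    intro j
    rw [hystar]
    simp only [lp.coeFn_smul, lp.coeFn_sub, Pi.smul_apply, Pi.sub_apply, smul_eq_mul,
      tsum_single_coord I x j]
    by_cases hj : j ∈ I <;>
      simp [Set.indicator_of_mem, Set.indicator_of_notMem, hj]
  have hy0 : ystar 0 = s⁻¹ * x 0 := by
    rw [hyc]; simp [h0I]
  -- sum over {1 ≤ i} of indicator of A' is T'
  have hsubA' : ∀ f : ℕ → ℝ, (∀ i : ℕ, 1 ≤ i → i ∉ I → f i = q i) →
      (∀ i : ℕ, 1 ≤ i → i ∈ I → f i = 0) →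
      (∑' i : {i : ℕ // 1 ≤ i}, f i) = T' := by
    intro f hf1 hf2
    rw [show (∑' i : {i : ℕ // 1 ≤ i}, f i) = ∑' i : ({i : ℕ | 1 ≤ i} : Set ℕ), f i from rfl,
      tsum_subtype {i : ℕ | 1 ≤ i} f, hT'ind]
    apply tsum_congr
    intro i
    by_cases h1 : 1 ≤ i
    · by_cases h2 : i ∈ I
      · simp [Set.indicator_apply, hA'def, h1, h2, hf2 i h1 h2]
      · simp [Set.indicator_apply, hA'def, h1, h2, hf1 i h1 h2]
    · have h2 : i ∉ I := fun h => h1 (hIA i h)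
      simp [Set.indicator_apply, hA'def, h1]
  -- splitting: ∑_{i ≥ 1} x_i^2 = S + T'
  have hsplit : (∑' i : {i : ℕ // 1 ≤ i}, x i * x i) = S + T' := by
    rw [show (∑' i : {i : ℕ // 1 ≤ i}, x i * x i)
        = ∑' i : ({i : ℕ | 1 ≤ i} : Set ℕ), (fun i => x i * x i) i from rfl,
      tsum_subtype {i : ℕ | 1 ≤ i} (fun i => x i * x i), hSind, hT'ind]
    rw [← Summable.tsum_add (hx2.indicator I) (hx2.indicator A')]
    apply tsum_congr
    intro i
    by_cases h1 : 1 ≤ i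
    · by_cases h2 : i ∈ I
      · simp [Set.indicator_apply, hA'def, hqdef, h1, h2, sq]
      · simp [Set.indicator_apply, hA'def, hqdef, h1, h2, sq]
    · have h2 : i ∉ I := fun h => h1 (hIA i h)
      simp [Set.indicator_apply, hA'def, hqdef, h1, h2]
  have hxval : x 0 ^ 2 - T' = 1 + S := by
    unfold Qform Bform at hxQ
    rw [hsplit] at hxQ
    nlinarith [hxQ]
  -- the value of B(x, ystar)
  have hss : s⁻¹ * s = 1 := inv_mul_cancel₀ hsne
  have hx0T : x 0 ^ 2 - T' = s ^ 2 := by rw [hs2]; linarith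
  have hsB : -(Bform x ystar) = s := by
    unfold Bform
    have h1 : (∑' i : {i : ℕ // 1 ≤ i}, x i * ystar i) = s⁻¹ * T' := by
      have hterm : ∀ i : {i : ℕ // 1 ≤ i},
          x i * ystar i = s⁻¹ * (fun j => x j * Set.indicator Iᶜ (fun k => x k) j) i := by
        rintro ⟨i, hi⟩
        simp only [hyc]
        ring
      rw [tsum_congr hterm, tsum_mul_left]
      congr 1
      refine hsubA' (fun j => x j * Set.indicator Iᶜ (fun k => x k) j) ?_ ?_
      · intro i h1 h2; simp [Set.indicator_of_mem, h2, hqdef, sq, Set.mem_compl_iff]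
      · intro i h1 h2; simp [Set.indicator_of_notMem, h2, Set.mem_compl_iff]
    rw [h1, hy0]
    linear_combination s⁻¹ * hx0T + s * hss
  -- ystar ∈ Hyp
  have hyQ : Qform ystar = -1 := by
    unfold Qform Bform
    have h1 : (∑' i : {i : ℕ // 1 ≤ i}, ystar i * ystar i) = s⁻¹ * s⁻¹ * T' := by
      have hterm : ∀ i : {i : ℕ // 1 ≤ i},
          ystar i * ystar i = (s⁻¹ * s⁻¹) *
            (fun j => Set.indicator Iᶜ (fun k => x k) j * Set.indicator Iᶜ (fun k => x k) j) i := by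
        rintro ⟨i, hi⟩
        simp only [hyc]
        ring
      rw [tsum_congr hterm, tsum_mul_left]
      congr 1
      refine hsubA'
        (fun j => Set.indicator Iᶜ (fun k => x k) j * Set.indicator Iᶜ (fun k => x k) j) ?_ ?_
      · intro i h1 h2
        simp [Set.indicator_of_mem, h2, hqdef, sq, Set.mem_compl_iff]
      · intro i h1 h2
        simp [Set.indicator_of_notMem, h2, Set.mem_compl_iff]
    rw [h1, hy0]
    linear_combination (-(s⁻¹ * s⁻¹)) * hx0T - (s⁻¹ * s + 1) * hss
  have hyI : ∀ i ∈ I, ystar i = 0 := by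
    intro i hi
    rw [hyc]
    simp [Set.indicator_of_notMem, hi, Set.mem_compl_iff]
  have hyHyp : ystar ∈ Hyp := ⟨hyQ, by
    rw [hy0]; exact mul_pos (inv_pos.2 hs0) hx0⟩
  have hymem : ystar ∈ Y := by
    rw [hY]; exact ⟨hyHyp, hyI⟩
  -- scaling identity for y ∈ Y
  have hscale : ∀ y : ℓ2, (∀ i ∈ I, y i = 0) → Bform x y = s * Bform ystar y := by
    intro y hyz
    unfold Bform
    have hterm : ∀ i : {i : ℕ // 1 ≤ i},
        x i * y i = s * (fun j => ystar j * y j) i := by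
      rintro ⟨i, hi⟩
      by_cases hiI : i ∈ I
      · simp [hyz i hiI]
      · simp only [hyc]
        rw [Set.indicator_of_mem (Set.mem_compl hiI)]
        linear_combination (-(x i * y i)) * hss
    rw [tsum_congr hterm, tsum_mul_left]
    have hx0y : x 0 = s * ystar 0 := by
      rw [hy0]; linear_combination (-(x 0)) * hss
    rw [hx0y]; ring
  -- lower bound
  have hlow : ∀ y ∈ Y, arcosh (-(Bform x ystar)) ≤ arcosh (-(Bform x y)) := by
    intro y hyY
    rw [hY] at hyY
    obtain ⟨hyH, hyz⟩ := hyY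
    have h1 : 1 ≤ -(Bform ystar y) := bform_ge_one hyHyp hyH
    have h2 : -(Bform x y) = s * (-(Bform ystar y)) := by
      rw [hscale y hyz]; ring
    apply arcosh_mono (by rw [hsB]; exact hs1)
    rw [hsB, h2]
    nlinarith
  refine ⟨hymem, ⟨⟨ystar, hymem, rfl⟩, ?_⟩, ?_⟩
  · rintro r ⟨y, hyY, rfl⟩
    exact hlow y hyY
  · rw [hsB]
    congr 1
    rw [hsdef]
    congr 1
    linarith
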